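/- For a finely layered medium of n isotropic layers satisfying the strict stability conditions, the Backus-average equivalent medium is isotropic—i.e., c1212 = c2323, c1111 = c3333 and c1133 = c1111 − 2·c1212—if and only if the rigidity μ is constant across the layers (μᵢ = μⱼ for all i, j). -/

import Mathlib

open Filter Real

noncomputable section

/-- Arithmetic average of `n` values (equal layer thickness). -/
def avgN (n : ℕ) (f : Fin n → ℝ) : ℝ := (∑ i, f i) / n

/-- Backus-average coefficient c1111 of `n` isotropic layers. -/
def c1111N (n : ℕ) (lam mu : Fin n → ℝ) : ℝ :=
  (avgN n (fun i => lam i / (lam i + 2 * mu i))) ^ 2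
      * (avgN n (fun i => 1 / (lam i + 2 * mu i)))⁻¹
    + avgN n (fun i => 4 * (lam i + mu i) * mu i / (lam i + 2 * mu i))

/-- Backus-average coefficient c1122 of `n` isotropic layers. -/
def c1122N (n : ℕ) (lam mu : Fin n → ℝ) : ℝ :=
  (avgN n (fun i => lam i / (lam i + 2 * mu i))) ^ 2
      * (avgN n (fun i => 1 / (lam i + 2 * mu i)))⁻¹
    + avgN n (fun i => 2 * lam i * mu i / (lam i + 2 * mu i))

/-- Backus-average coefficient c1133 of `n` isotropic layers. -/
def c1133N (n : ℕ) (lam mu : Fin n → ℝ) : ℝ :=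
  avgN n (fun i => lam i / (lam i + 2 * mu i))
    * (avgN n (fun i => 1 / (lam i + 2 * mu i)))⁻¹

/-- Backus-average coefficient c3333 of `n` isotropic layers. -/
def c3333N (n : ℕ) (lam mu : Fin n → ℝ) : ℝ :=
  (avgN n (fun i => 1 / (lam i + 2 * mu i)))⁻¹

/-- Backus-average coefficient c2323 of `n` isotropic layers. -/
def c2323N (n : ℕ) (mu : Fin n → ℝ) : ℝ := (avgN n (fun i => 1 / mu i))⁻¹

/-- Backus-average coefficient c1212 of `n` isotropic layers. -/
def c1212N (n : ℕ) (mu : Fin n → ℝ) : ℝ := avgN n mu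

end

/-- AM-HM equality case. -/
lemma amhm_eq {n : ℕ} (mu : Fin n → ℝ) (hmu : ∀ i, 0 < mu i)
    (h : (∑ i, mu i) * (∑ i, 1 / mu i) = (n : ℝ) * n) : ∀ i j, mu i = mu j := by
  have key : ∑ i, ∑ j, (mu i - mu j) ^ 2 / (mu i * mu j) = 0 := by
    have e : ∀ i j : Fin n, (mu i - mu j) ^ 2 / (mu i * mu j)
        = mu i * (1 / mu j) + mu j * (1 / mu i) - 2 := by
      intro i j
      have hi := (hmu i).ne'
      have hj := (hmu j).ne'
      field_simp
      ring
    simp only [e]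
    have h1 : ∑ i, ∑ j, mu i * (1 / mu j) = (∑ i, mu i) * (∑ j, 1 / mu j) := by
      rw [Finset.sum_mul_sum]
    have h2 : ∑ i : Fin n, ∑ j : Fin n, mu j * (1 / mu i)
        = (∑ i, mu i) * (∑ j, 1 / mu j) := by
      rw [Finset.sum_comm, Finset.sum_mul_sum]
    simp only [Finset.sum_sub_distrib, Finset.sum_add_distrib, h1, h2,
      Finset.sum_const, Finset.card_univ, Fintype.card_fin, nsmul_eq_mul]
    rw [h]; ring
  intro i j
  have nonneg : ∀ i ∈ Finset.univ, (0:ℝ) ≤ ∑ j, (mu i - mu j) ^ 2 / (mu i * mu j) := by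
    intro i _
    exact Finset.sum_nonneg fun j _ =>
      div_nonneg (sq_nonneg _) (le_of_lt (mul_pos (hmu i) (hmu j)))
  have hrow := (Finset.sum_eq_zero_iff_of_nonneg nonneg).mp key i (Finset.mem_univ i)
  have nonneg2 : ∀ j ∈ Finset.univ, (0:ℝ) ≤ (mu i - mu j) ^ 2 / (mu i * mu j) :=
    fun j _ => div_nonneg (sq_nonneg _) (le_of_lt (mul_pos (hmu i) (hmu j)))
  have hterm := (Finset.sum_eq_zero_iff_of_nonneg nonneg2).mp hrow j (Finset.mem_univ j)
  have hden : mu i * mu j ≠ 0 := (mul_pos (hmu i) (hmu j)).ne'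
  have := div_eq_zero_iff.mp hterm
  rcases this with h0 | h0
  · have := pow_eq_zero_iff (n := 2) (by norm_num) |>.mp h0
    linarith [this]
  · exact absurd h0 hden

/-- For n isotropic layers satisfying the strict stability conditions,
the Backus-average medium is isotropic (c1212 = c2323, c1111 = c3333 and
c1133 = c1111 − 2·c1212) iff the rigidity μ is constant across the layers. -/
theorem stmt9 (n : ℕ) (hn : 1 ≤ n) (lam mu : Fin n → ℝ)
    (hmu : ∀ i, 0 < mu i) (hlm : ∀ i, 0 < lam i + 2 * mu i) :
    (c1212N n mu = c2323N n mu ∧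
      c1111N n lam mu = c3333N n lam mu ∧
      c1133N n lam mu = c1111N n lam mu - 2 * c1212N n mu)
    ↔ (∀ i j, mu i = mu j) := by
  have hnR : (0:ℝ) < n := by exact_mod_cast hn
  have hne : (Finset.univ : Finset (Fin n)).Nonempty := by
    rw [Finset.univ_nonempty_iff]
    exact Fin.pos_iff_nonempty.mp hn
  constructor
  · rintro ⟨h1, -, -⟩
    -- from c1212 = c2323 deduce (∑μ)(∑1/μ) = n*n
    have hS : 0 < ∑ i, mu i := Finset.sum_pos (fun i _ => hmu i) hne
    have hT : 0 < ∑ i, 1 / mu i :=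
      Finset.sum_pos (fun i _ => one_div_pos.mpr (hmu i)) hne
    apply amhm_eq mu hmu
    unfold c1212N c2323N avgN at h1
    field_simp at h1
    nlinarith [h1]
  · intro hconst
    set i0 : Fin n := ⟨0, hn⟩
    set m : ℝ := mu i0 with hm
    have hmeq : ∀ i, mu i = m := fun i => hconst i i0
    have hm0 : 0 < m := hmu i0
    have hlm' : ∀ i, lam i + 2 * m > 0 := by
      intro i; rw [← hmeq i]; exact hlm i
    set A : ℝ := avgN n (fun i => 1 / (lam i + 2 * m)) with hA
    have hApos : 0 < A := by
      rw [hA]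
      unfold avgN
      exact div_pos (Finset.sum_pos (fun i _ => by
        have := hlm' i; positivity) hne) hnR
    have havg_const : ∀ c : ℝ, avgN n (fun _ => c) = c := by
      intro c
      unfold avgN
      rw [Finset.sum_const, Finset.card_univ, Fintype.card_fin, nsmul_eq_mul]
      field_simp
    have hid1 : avgN n (fun i => lam i / (lam i + 2 * m)) = 1 - 2 * m * A := by
      have : (fun i => lam i / (lam i + 2 * m))
          = fun i => 1 - 2 * m * (1 / (lam i + 2 * m)) := by
        funext i
        have := (hlm' i).ne'
        field_simp
        ring
      rw [this, hA]
      unfold avgN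
      rw [Finset.sum_sub_distrib, Finset.sum_const, Finset.card_univ,
        Fintype.card_fin, nsmul_eq_mul, ← Finset.mul_sum]
      field_simp
    have hid2 : avgN n (fun i => 4 * (lam i + m) * m / (lam i + 2 * m))
        = 4 * m - 4 * m ^ 2 * A := by
      have : (fun i => 4 * (lam i + m) * m / (lam i + 2 * m))
          = fun i => 4 * m - 4 * m ^ 2 * (1 / (lam i + 2 * m)) := by
        funext i
        have := (hlm' i).ne'
        rw [mul_one_div, eq_sub_iff_add_eq, ← add_div, div_eq_iff this]
        ring
      rw [this, hA]
      unfold avgN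
      rw [Finset.sum_sub_distrib, Finset.sum_const, Finset.card_univ,
        Fintype.card_fin, nsmul_eq_mul, ← Finset.mul_sum]
      field_simp
    have h1212 : c1212N n mu = m := by
      unfold c1212N avgN
      have : ∑ i, mu i = (n:ℝ) * m := by
        rw [Finset.sum_congr rfl (fun i _ => hmeq i), Finset.sum_const,
          Finset.card_univ, Fintype.card_fin, nsmul_eq_mul]
      rw [this]; field_simp
    have h2323 : c2323N n mu = m := by
      unfold c2323N
      have : (fun i => 1 / mu i) = fun _ : Fin n => 1 / m := by
        funext i; rw [hmeq i]
      rw [this, havg_const]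
      rw [one_div, inv_inv]
    -- rewrite mu as m in c1111, c1133, c3333
    have hfun1 : (fun i => lam i / (lam i + 2 * mu i))
        = fun i => lam i / (lam i + 2 * m) := by funext i; rw [hmeq i]
    have hfun2 : (fun i => 1 / (lam i + 2 * mu i))
        = fun i => 1 / (lam i + 2 * m) := by funext i; rw [hmeq i]
    have hfun3 : (fun i => 4 * (lam i + mu i) * mu i / (lam i + 2 * mu i))
        = fun i => 4 * (lam i + m) * m / (lam i + 2 * m) := by
      funext i; rw [hmeq i]
    have h1111 : c1111N n lam mu = A⁻¹ := by
      unfold c1111N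
      rw [hfun1, hfun2, hfun3, hid1, hid2, ← hA]
      have := hApos.ne'
      field_simp
      ring
    have h3333 : c3333N n lam mu = A⁻¹ := by
      unfold c3333N
      rw [hfun2, ← hA]
    have h1133 : c1133N n lam mu = A⁻¹ - 2 * m := by
      unfold c1133N
      rw [hfun1, hfun2, hid1, ← hA]
      have := hApos.ne'
      field_simp
    refine ⟨h1212.trans h2323.symm, h1111.trans h3333.symm, ?_⟩
    rw [h1133, h1111, h1212]
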